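/- Let n = s₁ + r₂ + s₃, let C be an n×n upper triangular invertible matrix and C' an n×n lower triangular invertible matrix, written in 3×3 block form for this partition. Set P = diag(I_{s₁}, J_{r₂}, I_{s₃}), U = diag(I_{s₁}, C_{2,2}⁻¹, I_{s₃}), V = diag(I_{s₁}, C'_{2,2}, I_{s₃}). Then C̃ = P·U·C·V·P is upper triangular with diagonal blocks C̃_{1,1} = C_{1,1}, C̃_{2,2} = J_{r₂}·C'_{2,2}·J_{r₂}, C̃_{3,3} = C_{3,3}, and in particular det C̃ = det C_{1,1} · det C'_{2,2} · det C_{3,3}. -/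

import Mathlib

open Matrix

/-- The r×r anti-diagonal matrix. -/
def Jmat (r : ℕ) : Matrix (Fin r) (Fin r) ℂ :=
  Matrix.of fun i j => if (i : ℕ) + (j : ℕ) + 1 = r then 1 else 0

lemma Jmat_apply (r : ℕ) (i j : Fin r) :
    Jmat r i j = if j = Fin.rev i then 1 else 0 := by
  have hi := i.isLt
  simp only [Jmat, Matrix.of_apply]
  congr 1
  simp only [eq_iff_iff, Fin.ext_iff, Fin.val_rev]
  omega

lemma Jmat_mul {r : ℕ} (A : Matrix (Fin r) (Fin r) ℂ) :
    Jmat r * A = A.submatrix Fin.rev id := by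
  ext i j
  simp [Matrix.mul_apply, Jmat_apply, ite_mul]

lemma mul_Jmat {r : ℕ} (A : Matrix (Fin r) (Fin r) ℂ) :
    A * Jmat r = A.submatrix id Fin.rev := by
  ext i j
  have : ∀ k : Fin r, (j = Fin.rev k) = (k = Fin.rev j) := by
    intro k
    simp [eq_comm (a := j), Fin.rev_eq_iff]
  simp [Matrix.mul_apply, Jmat_apply, this, mul_ite]

lemma Jmat_mul_Jmat (r : ℕ) : Jmat r * Jmat r = 1 := by
  ext i j
  simp [Jmat_mul, Jmat_apply, Matrix.one_apply, eq_comm]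


/-- Main theorem, case `m = 1`, structural form: for `n = s₁ + r₂ + s₃` and `C` upper
triangular invertible, `C'` lower triangular invertible (blockwise),
`C̃ = P·U·C·V·P` (with `P = diag(I, J, I)`, `U = diag(I, C₂₂⁻¹, I)`, `V = diag(I, C'₂₂, I)`)
is upper triangular with diagonal blocks `C₁₁`, `J·C'₂₂·J`, `C₃₃`, and
`det C̃ = det C₁₁ · det C'₂₂ · det C₃₃`. -/
theorem stmt18 (s₁ r₂ s₃ : ℕ)
    (C C' : Matrix (Fin s₁ ⊕ Fin r₂ ⊕ Fin s₃) (Fin s₁ ⊕ Fin r₂ ⊕ Fin s₃) ℂ)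
    (hCinv : IsUnit C.det) (hC'inv : IsUnit C'.det)
    -- C is (blockwise) upper triangular:
    (hC21 : ∀ (i : Fin r₂) (j : Fin s₁), C (Sum.inr (Sum.inl i)) (Sum.inl j) = 0)
    (hC31 : ∀ (i : Fin s₃) (j : Fin s₁), C (Sum.inr (Sum.inr i)) (Sum.inl j) = 0)
    (hC32 : ∀ (i : Fin s₃) (j : Fin r₂), C (Sum.inr (Sum.inr i)) (Sum.inr (Sum.inl j)) = 0)
    (hC11 : ∀ i j : Fin s₁, j < i → C (Sum.inl i) (Sum.inl j) = 0)
    (hC22 : ∀ i j : Fin r₂, j < i → C (Sum.inr (Sum.inl i)) (Sum.inr (Sum.inl j)) = 0)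
    (hC33 : ∀ i j : Fin s₃, j < i → C (Sum.inr (Sum.inr i)) (Sum.inr (Sum.inr j)) = 0)
    -- C' is (blockwise) lower triangular:
    (hC'12 : ∀ (i : Fin s₁) (j : Fin r₂), C' (Sum.inl i) (Sum.inr (Sum.inl j)) = 0)
    (hC'13 : ∀ (i : Fin s₁) (j : Fin s₃), C' (Sum.inl i) (Sum.inr (Sum.inr j)) = 0)
    (hC'23 : ∀ (i : Fin r₂) (j : Fin s₃), C' (Sum.inr (Sum.inl i)) (Sum.inr (Sum.inr j)) = 0)
    (hC'11 : ∀ i j : Fin s₁, i < j → C' (Sum.inl i) (Sum.inl j) = 0)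
    (hC'22 : ∀ i j : Fin r₂, i < j → C' (Sum.inr (Sum.inl i)) (Sum.inr (Sum.inl j)) = 0)
    (hC'33 : ∀ i j : Fin s₃, i < j → C' (Sum.inr (Sum.inr i)) (Sum.inr (Sum.inr j)) = 0) :
    let C11 : Matrix (Fin s₁) (Fin s₁) ℂ := fun i j => C (Sum.inl i) (Sum.inl j)
    let C22 : Matrix (Fin r₂) (Fin r₂) ℂ := fun i j => C (Sum.inr (Sum.inl i)) (Sum.inr (Sum.inl j))
    let C33 : Matrix (Fin s₃) (Fin s₃) ℂ := fun i j => C (Sum.inr (Sum.inr i)) (Sum.inr (Sum.inr j))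
    let C'22 : Matrix (Fin r₂) (Fin r₂) ℂ := fun i j => C' (Sum.inr (Sum.inl i)) (Sum.inr (Sum.inl j))
    let U := fromBlocks (1 : Matrix (Fin s₁) (Fin s₁) ℂ) 0 0
        (fromBlocks C22⁻¹ 0 0 (1 : Matrix (Fin s₃) (Fin s₃) ℂ))
    let V := fromBlocks (1 : Matrix (Fin s₁) (Fin s₁) ℂ) 0 0
        (fromBlocks C'22 0 0 (1 : Matrix (Fin s₃) (Fin s₃) ℂ))
    let P := fromBlocks (1 : Matrix (Fin s₁) (Fin s₁) ℂ) 0 0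
        (fromBlocks (Jmat r₂) 0 0 (1 : Matrix (Fin s₃) (Fin s₃) ℂ))
    let Ct := P * U * C * V * P
    -- C̃ is (blockwise) upper triangular:
    (∀ (i : Fin r₂) (j : Fin s₁), Ct (Sum.inr (Sum.inl i)) (Sum.inl j) = 0) ∧
    (∀ (i : Fin s₃) (j : Fin s₁), Ct (Sum.inr (Sum.inr i)) (Sum.inl j) = 0) ∧
    (∀ (i : Fin s₃) (j : Fin r₂), Ct (Sum.inr (Sum.inr i)) (Sum.inr (Sum.inl j)) = 0) ∧
    (∀ i j : Fin s₁, j < i → Ct (Sum.inl i) (Sum.inl j) = 0) ∧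
    (∀ i j : Fin r₂, j < i → Ct (Sum.inr (Sum.inl i)) (Sum.inr (Sum.inl j)) = 0) ∧
    (∀ i j : Fin s₃, j < i → Ct (Sum.inr (Sum.inr i)) (Sum.inr (Sum.inr j)) = 0) ∧
    -- diagonal blocks:
    (∀ i j : Fin s₁, Ct (Sum.inl i) (Sum.inl j) = C11 i j) ∧
    (∀ i j : Fin r₂, Ct (Sum.inr (Sum.inl i)) (Sum.inr (Sum.inl j)) =
      (Jmat r₂ * C'22 * Jmat r₂) i j) ∧
    (∀ i j : Fin s₃, Ct (Sum.inr (Sum.inr i)) (Sum.inr (Sum.inr j)) = C33 i j) ∧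
    Ct.det = C11.det * C'22.det * C33.det := by
  
  intro C11 C22 C33 C'22 U V P Ct
  set C12 : Matrix (Fin s₁) (Fin r₂ ⊕ Fin s₃) ℂ :=
    Matrix.of fun i j => C (Sum.inl i) (Sum.inr j) with hC12def
  set C23 : Matrix (Fin r₂) (Fin s₃) ℂ :=
    Matrix.of fun i j => C (Sum.inr (Sum.inl i)) (Sum.inr (Sum.inr j)) with hC23def
  have hC : C = fromBlocks C11 C12 0 (fromBlocks C22 C23 0 C33) := by
    ext x y
    rcases x with i | i | i <;> rcases y with j | j | j <;>
      simp [fromBlocks, hC21, hC31, hC32, C11, C22, C33, C12, C23]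
  have hU22 : IsUnit C22.det := by
    rw [hC] at hCinv
    simp only [Matrix.det_fromBlocks_zero₂₁, IsUnit.mul_iff] at hCinv
    exact hCinv.2.1
  have hC22inv : C22⁻¹ * C22 = 1 := Matrix.nonsing_inv_mul _ hU22
  have hCt : Ct = fromBlocks C11
      (C12 * (fromBlocks C'22 0 0 1 * fromBlocks (Jmat r₂) 0 0 1 :
        Matrix (Fin r₂ ⊕ Fin s₃) (Fin r₂ ⊕ Fin s₃) ℂ)) 0
      (fromBlocks (Jmat r₂ * (C'22 * Jmat r₂)) (Jmat r₂ * (C22⁻¹ * C23)) 0 C33) := by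
    show P * U * C * V * P = _
    rw [hC]
    show fromBlocks 1 0 0 (fromBlocks (Jmat r₂) 0 0 1) *
        (fromBlocks 1 0 0 (fromBlocks C22⁻¹ 0 0 1)) * _ *
        (fromBlocks 1 0 0 (fromBlocks C'22 0 0 1)) *
        (fromBlocks 1 0 0 (fromBlocks (Jmat r₂) 0 0 1)) = _
    simp [fromBlocks_multiply, Matrix.mul_assoc, ← Matrix.mul_assoc C22⁻¹ C22, hC22inv]
  have hJAJ : Jmat r₂ * (C'22 * Jmat r₂) = C'22.submatrix Fin.rev Fin.rev := by
    rw [mul_Jmat, Jmat_mul]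
    ext i j
    simp
  refine ⟨?_, ?_, ?_, ?_, ?_, ?_, ?_, ?_, ?_, ?_⟩
  · intro i j; rw [hCt]; simp [fromBlocks]
  · intro i j; rw [hCt]; simp [fromBlocks]
  · intro i j; rw [hCt]; simp [fromBlocks]
  · intro i j hji; rw [hCt]; simpa [fromBlocks] using hC11 i j hji
  · intro i j hji; rw [hCt]
    simp only [fromBlocks_apply₂₂, fromBlocks_apply₁₁, hJAJ, Matrix.submatrix_apply]
    exact hC'22 _ _ (Fin.rev_lt_rev.mpr hji)
  · intro i j hji; rw [hCt]; simpa [fromBlocks] using hC33 i j hji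
  · intro i j; rw [hCt]; simp [fromBlocks]
  · intro i j; rw [hCt]; simp [fromBlocks, Matrix.mul_assoc]
  · intro i j; rw [hCt]; simp [fromBlocks]
  · have hdetJ : (Jmat r₂).det * (Jmat r₂).det = 1 := by
      have := congrArg Matrix.det (Jmat_mul_Jmat r₂)
      simpa [Matrix.det_mul] using this
    rw [hCt, Matrix.det_fromBlocks_zero₂₁, Matrix.det_fromBlocks_zero₂₁]
    simp only [Matrix.det_mul]
    have h2 : (Jmat r₂).det * (C'22.det * (Jmat r₂).det) = C'22.det := by
      calc (Jmat r₂).det * (C'22.det * (Jmat r₂).det)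
          = C'22.det * ((Jmat r₂).det * (Jmat r₂).det) := by ring
        _ = C'22.det := by rw [hdetJ, mul_one]
    rw [h2]; ring
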